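/- Let G be a CADMG and let G' be a CADMG with random vertex set V' that is reachable from G. Then the intrinsic sets of G' are precisely the intrinsic sets of G that are contained in V', and each such intrinsic set has the same recursive head and the same tail in G' as in G. -/

import Mathlib

open Classical

noncomputable section

/-- A conditional acyclic directed mixed graph (CADMG): disjoint sets of random
vertices `V` and fixed vertices `W`, directed edges into `V` with no loops or
directed cycles, symmetric bidirected edges between distinct random vertices,
and every fixed vertex has at least one child. -/
structure CADMG (α : Type) where
  V : Set α
  W : Set α
  dir : Set (α × α)
  bi : Set (α × α)
  disjointVW : Disjoint V W
  dir_mem : ∀ e ∈ dir, e.1 ∈ V ∪ W ∧ e.2 ∈ V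
  dir_irrefl : ∀ e ∈ dir, e.1 ≠ e.2
  acyclic : ∀ a b : α, Relation.ReflTransGen (fun x y => (x, y) ∈ dir) a b →
      Relation.ReflTransGen (fun x y => (x, y) ∈ dir) b a → a = b
  bi_symm : ∀ a b : α, (a, b) ∈ bi → (b, a) ∈ bi
  bi_mem : ∀ e ∈ bi, e.1 ∈ V ∧ e.2 ∈ V
  bi_irrefl : ∀ e ∈ bi, e.1 ≠ e.2
  fixed_child : ∀ w ∈ W, ∃ v, (w, v) ∈ dir

namespace CADMG

variable {α : Type}

/-- The parents of a vertex. -/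
def pa (G : CADMG α) (b : α) : Set α := {a | (a, b) ∈ G.dir}

/-- The parents of a set of vertices. -/
def paSet (G : CADMG α) (A : Set α) : Set α := {a | ∃ b ∈ A, (a, b) ∈ G.dir}

/-- The ancestors of a set of vertices (every vertex is its own ancestor). -/
def anc (G : CADMG α) (A : Set α) : Set α :=
  {w | ∃ v ∈ A, Relation.ReflTransGen (fun x y => (x, y) ∈ G.dir) w v}

/-- An ancestral set contains all of its own ancestors. -/
def Ancestral (G : CADMG α) (A : Set α) : Prop := G.anc A = A

/-- A random-ancestral set: a set of random vertices all of whose ancestors are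
in the set itself or fixed. -/
def RandomAncestral (G : CADMG α) (A : Set α) : Prop :=
  A ⊆ G.V ∧ G.anc A ⊆ A ∪ G.W

/-- The sterile subset of `C`: those members of `C` that are not parents of `C`. -/
def sterile (G : CADMG α) (C : Set α) : Set α := C \ G.paSet C

/-- A bidirected-connected set of random vertices: every two members are joined by
a path of bidirected edges with all intermediate vertices inside the set. -/
def BiConn (G : CADMG α) (B : Set α) : Prop :=
  B ⊆ G.V ∧ ∀ a ∈ B, ∀ b ∈ B,
    Relation.ReflTransGen (fun x y => (x, y) ∈ G.bi ∧ x ∈ B ∧ y ∈ B) a b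

/-- A district: a maximal bidirected-connected set of random vertices. -/
def IsDistrict (G : CADMG α) (D : Set α) : Prop :=
  D.Nonempty ∧ G.BiConn D ∧ ∀ D', G.BiConn D' → D ⊆ D' → D' = D

/-- `dis G B`: the union of the districts of `G` meeting `B`. -/
def dis (G : CADMG α) (B : Set α) : Set α :=
  ⋃₀ {D | G.IsDistrict D ∧ (D ∩ B).Nonempty}

/-- The induced graph `G[C]`: random vertices `C`, fixed vertices `pa_G(C) \ C`,
the bidirected edges of `G` within `C` and the directed edges of `G` pointing
into `C`. -/
def induce (G : CADMG α) (C : Set α) : CADMG α where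
  V := C ∩ G.V
  W := G.paSet (C ∩ G.V) \ (C ∩ G.V)
  dir := {e | e ∈ G.dir ∧ e.2 ∈ C ∩ G.V}
  bi := {e | e ∈ G.bi ∧ e.1 ∈ C ∩ G.V ∧ e.2 ∈ C ∩ G.V}
  disjointVW := by
    rw [Set.disjoint_left]; rintro a ha ⟨-, h⟩; exact h ha
  dir_mem := by
    rintro e ⟨he, h2⟩
    refine ⟨?_, h2⟩
    by_cases h1 : e.1 ∈ C ∩ G.V
    · exact Or.inl h1
    · exact Or.inr ⟨⟨e.2, h2, he⟩, h1⟩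
  dir_irrefl := fun e he => G.dir_irrefl e he.1
  acyclic := fun a b h1 h2 =>
    G.acyclic a b
      (by
        clear h2
        induction h1 with
        | refl => exact Relation.ReflTransGen.refl
        | tail _ h ih => exact ih.tail h.1)
      (by
        clear h1
        induction h2 with
        | refl => exact Relation.ReflTransGen.refl
        | tail _ h ih => exact ih.tail h.1)
  bi_symm := fun a b h => ⟨G.bi_symm a b h.1, h.2.2, h.2.1⟩
  bi_mem := fun e he => ⟨he.2.1, he.2.2⟩
  bi_irrefl := fun e he => G.bi_irrefl e he.1
  fixed_child := by
    rintro w ⟨⟨b, hb, hwb⟩, -⟩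
    exact ⟨b, hwb, hb⟩

/-- A CADMG `G'` is reachable from `G` if it is obtained by iteratively
restricting to a district (`𝔡`) or to a random-ancestral set (`𝔪`). -/
inductive Reach : CADMG α → CADMG α → Prop where
  | refl (G : CADMG α) : Reach G G
  | district {G₁ G₂ : CADMG α} {D : Set α} :
      Reach G₁ G₂ → G₂.IsDistrict D → Reach G₁ (G₂.induce D)
  | margin {G₁ G₂ : CADMG α} {A : Set α} :
      Reach G₁ G₂ → G₂.RandomAncestral A → Reach G₁ (G₂.induce A)

/-- `G₁` is a subgraph of `G₂`. -/
def Subgraph (G₁ G₂ : CADMG α) : Prop :=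
  G₁.V ⊆ G₂.V ∧ G₁.W ⊆ G₂.W ∧ G₁.dir ⊆ G₂.dir ∧ G₁.bi ⊆ G₂.bi

/-- An intrinsic set: a nonempty bidirected-connected set `S` of random vertices
such that `G[S]` is reachable from `G`. -/
def Intrinsic (G : CADMG α) (S : Set α) : Prop :=
  S.Nonempty ∧ G.BiConn S ∧ Reach G (G.induce S)

/-- The recursive heads of `G`: sterile subsets of intrinsic sets. -/
def heads (G : CADMG α) : Set (Set α) :=
  {H | ∃ S, G.Intrinsic S ∧ G.sterile S = H}

/-- The (unique) intrinsic set whose recursive head is `H`. -/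
def intrinsicOf (G : CADMG α) (H : Set α) : Set α :=
  ⋃₀ {S | G.Intrinsic S ∧ G.sterile S = H}

/-- The partial order on recursive heads: `H₁ ≺ H₂` iff the intrinsic set of
`H₁` is strictly contained in that of `H₂`. -/
def headLT (G : CADMG α) (H₁ H₂ : Set α) : Prop :=
  G.intrinsicOf H₁ ⊂ G.intrinsicOf H₂

/-- The tail of a recursive head: the parents of its intrinsic set. -/
def tail (G : CADMG α) (H : Set α) : Set α := G.paSet (G.intrinsicOf H)

/-- One step of the intrinsic-closure iteration: restrict to the ancestors of
`B`, then to the districts meeting `B`. -/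
def closureStep (B : Set α) (G : CADMG α) : CADMG α :=
  (G.induce (G.anc B)).induce ((G.induce (G.anc B)).dis B)

/-- The intrinsic closure `I_G(B)`: the random vertex set of the stable graph
obtained by repeatedly alternating restriction to the ancestors of `B` and to
the districts meeting `B`.  (After `Fintype.card α` rounds the iteration has
stabilised.) -/
def intrinsicClosure [Fintype α] (G : CADMG α) (B : Set α) : Set α :=
  ((closureStep B)^[Fintype.card α] G).V

/-- `Φ_G(C)`: the `≺`-maximal recursive heads of `G` contained in `C`. -/
def Phi (G : CADMG α) (C : Set α) : Set (Set α) :=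
  {H | H ∈ G.heads ∧ H ⊆ C ∧ ∀ H' ∈ G.heads, H' ⊆ C → H' ≠ H → ¬ G.headLT H H'}

/-- `ψ_G(C) = C \ ⋃ Φ_G(C)`. -/
def psi (G : CADMG α) (C : Set α) : Set α := C \ ⋃₀ G.Phi C

/-- The recursive-head partition `⟨C⟩_G`, defined by `⟨∅⟩ = ∅` and
`⟨C⟩ = Φ(C) ∪ ⟨ψ(C)⟩`.  (The guard on cardinalities is automatically satisfied
whenever the recursion is used, since `ψ_G(C) ⊊ C` for nonempty `C`.) -/
def partn (G : CADMG α) (C : Set α) : Set (Set α) :=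
  if C = ∅ then ∅
  else if h : (G.psi C).ncard < C.ncard then G.Phi C ∪ G.partn (G.psi C)
  else G.Phi C
termination_by C.ncard
decreasing_by exact h

/-- A kernel `p_{V|W}`, written as a function of a full assignment of binary
values to all vertices: it takes values in `[0,1]`, depends only on the
coordinates in `V ∪ W`, and for every assignment to `W` (and the remaining
coordinates) the values summed over assignments to `V` equal `1`. -/
def IsKernel [Fintype α] (V W : Set α) (p : (α → Bool) → ℝ) : Prop :=
  (∀ x, 0 ≤ p x ∧ p x ≤ 1) ∧
  (∀ x y : α → Bool, (∀ v ∈ V ∪ W, x v = y v) → p x = p y) ∧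
  (∀ x : α → Bool, ∑ g : α → Bool,
      (if ∀ v, v ∉ V → g v = x v then p g else 0) = 1)

/-- Sum a function of assignments over all values of the coordinates in `D`
(the marginal summing out the variables in `D`). -/
def marginOut [Fintype α] (D : Set α) (p : (α → Bool) → ℝ) (x : α → Bool) : ℝ :=
  ∑ g : α → Bool, if ∀ v, v ∉ D → g v = x v then p g else 0

/-- `q` is a version of the conditional kernel of `A` given `B` and `W`, derived
from the kernel `p = p_{V|W}`. -/
def IsCondVersion [Fintype α] (V W A B : Set α)
    (p q : (α → Bool) → ℝ) : Prop :=
  IsKernel A (B ∪ W) q ∧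
  ∀ x : α → Bool, q x * marginOut (V \ B) p x = marginOut (V \ (A ∪ B)) p x

/-- Recursive factorization of a kernel `p` according to a CADMG `G`
(the nested Markov property): either `|V| = 1`, or (i) `p` factorizes into
kernels indexed by the districts of `G`, each of which (when there are at least
two districts) recursively factorizes according to the induced graph, and
(ii) for every ancestral set `A` with `V \ A ≠ ∅` the margin over `A` does not
depend on the fixed coordinates outside `A` and recursively factorizes
according to `G[V ∩ A]`. -/
inductive RF [Fintype α] : CADMG α → ((α → Bool) → ℝ) → Prop where
  | base (G : CADMG α) (p : (α → Bool) → ℝ) (h : G.V.ncard = 1) : RF G p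
  | factor (G : CADMG α) (p : (α → Bool) → ℝ)
      (Ds : Finset (Set α)) (r : Set α → (α → Bool) → ℝ)
      (hDs : ∀ D, G.IsDistrict D ↔ D ∈ Ds)
      (hker : ∀ D ∈ Ds, IsKernel D (G.paSet D \ D) (r D))
      (hfact : ∀ x, p x = ∏ D ∈ Ds, r D x)
      (hrec : 2 ≤ Ds.card → ∀ D ∈ Ds, RF (G.induce D) (r D))
      (hmarg_nodep : ∀ A : Set α, G.Ancestral A → (G.V \ A).Nonempty →
        ∀ x y : α → Bool, (∀ v ∈ (G.V ∩ A) ∪ (G.W ∩ A), x v = y v) →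
          marginOut (G.V \ A) p x = marginOut (G.V \ A) p y)
      (hmarg_rf : ∀ A : Set α, G.Ancestral A → (G.V \ A).Nonempty →
        RF (G.induce (G.V ∩ A)) (marginOut (G.V \ A) p)) :
      RF G p

/-- The alternating sum `Σ_{O ⊆ C ⊆ U} (−1)^{|C\O|} ∏_{H ∈ ⟨C⟩_G} q_H(x_T)`. -/
def altSum (G : CADMG α) (q : Set α → (α → Bool) → ℝ) (x : α → Bool)
    (O U : Set α) : ℝ :=
  ∑ᶠ C ∈ {C : Set α | O ⊆ C ∧ C ⊆ U},
    (-1 : ℝ) ^ (C \ O).ncard * ∏ᶠ H ∈ G.partn C, q H x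

/-- A kernel `p` is parameterized according to `G`: there are parameters
`q_H(x_T)` (one real number for each recursive head `H` and each value `x_T` of
its tail `T`) with
`p(x_V | x_W) = Σ_{O ⊆ C ⊆ V} (−1)^{|C\O|} ∏_{H ∈ ⟨C⟩_G} q_H(x_T)`,
where `O = {v ∈ V : x_v = 0}`. -/
def Parameterized [Fintype α] (G : CADMG α) (p : (α → Bool) → ℝ) : Prop :=
  ∃ q : Set α → (α → Bool) → ℝ,
    (∀ H ∈ G.heads, ∀ x y : α → Bool,
        (∀ v ∈ G.tail H, x v = y v) → q H x = q H y) ∧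
    ∀ x : α → Bool,
      p x = G.altSum q x {v | v ∈ G.V ∧ x v = false} G.V

theorem ext' {G₁ G₂ : CADMG α} (hV : G₁.V = G₂.V) (hW : G₁.W = G₂.W)
    (hd : G₁.dir = G₂.dir) (hb : G₁.bi = G₂.bi) : G₁ = G₂ := by
  cases G₁; cases G₂
  simp only at hV hW hd hb
  subst hV hW hd hb
  rfl

theorem reach_struct {G G' : CADMG α} (h : Reach G G') :
    G'.V ⊆ G.V ∧ G'.dir = {e | e ∈ G.dir ∧ e.2 ∈ G'.V} ∧
      G'.bi = {e | e ∈ G.bi ∧ e.1 ∈ G'.V ∧ e.2 ∈ G'.V} := by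
  induction h with
  | refl =>
    refine ⟨subset_rfl, ?_, ?_⟩
    · ext e; exact ⟨fun he => ⟨he, (G.dir_mem e he).2⟩, fun he => he.1⟩
    · ext e; exact ⟨fun he => ⟨he, (G.bi_mem e he).1, (G.bi_mem e he).2⟩, fun he => he.1⟩
  | @district G₂ C h hC ih =>
    obtain ⟨hV, hd, hb⟩ := ih
    refine ⟨fun a ha => hV ha.2, ?_, ?_⟩
    · ext e
      constructor
      · rintro ⟨he, h2⟩; exact ⟨(by rw [hd] at he; exact he.1), h2⟩
      · rintro ⟨he, h2⟩; exact ⟨by rw [hd]; exact ⟨he, h2.2⟩, h2⟩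
    · ext e
      constructor
      · rintro ⟨he, h1, h2⟩; exact ⟨(by rw [hb] at he; exact he.1), h1, h2⟩
      · rintro ⟨he, h1, h2⟩; exact ⟨by rw [hb]; exact ⟨he, h1.2, h2.2⟩, h1, h2⟩
  | @margin G₂ C h hC ih =>
    obtain ⟨hV, hd, hb⟩ := ih
    refine ⟨fun a ha => hV ha.2, ?_, ?_⟩
    · ext e
      constructor
      · rintro ⟨he, h2⟩; exact ⟨(by rw [hd] at he; exact he.1), h2⟩
      · rintro ⟨he, h2⟩; exact ⟨by rw [hd]; exact ⟨he, h2.2⟩, h2⟩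
    · ext e
      constructor
      · rintro ⟨he, h1, h2⟩; exact ⟨(by rw [hb] at he; exact he.1), h1, h2⟩
      · rintro ⟨he, h1, h2⟩; exact ⟨by rw [hb]; exact ⟨he, h1.2, h2.2⟩, h1, h2⟩

theorem reach_trans {G G' G'' : CADMG α} (h1 : Reach G G') (h2 : Reach G' G'') :
    Reach G G'' := by
  induction h2 with
  | refl => exact h1
  | district h hD ih => exact Reach.district ih hD
  | margin h hA ih => exact Reach.margin ih hA

theorem reach_paSet {G G' : CADMG α} (h : Reach G G') {S : Set α}
    (hS : S ⊆ G'.V) : G'.paSet S = G.paSet S := by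
  obtain ⟨-, hd, -⟩ := reach_struct h
  ext a
  simp only [paSet, hd, Set.mem_setOf_eq]
  exact ⟨fun ⟨b, hb, h1, _⟩ => ⟨b, hb, h1⟩, fun ⟨b, hb, h1⟩ => ⟨b, hb, h1, hS hb⟩⟩

theorem reach_induce {G G' : CADMG α} (h : Reach G G') {S : Set α}
    (hS : S ⊆ G'.V) : G'.induce S = G.induce S := by
  obtain ⟨hV, hd, hb⟩ := reach_struct h
  have h1 : S ∩ G'.V = S := Set.inter_eq_left.mpr hS
  have h2 : S ∩ G.V = S := Set.inter_eq_left.mpr (hS.trans hV)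
  apply ext'
  · show S ∩ G'.V = S ∩ G.V; rw [h1, h2]
  · show G'.paSet (S ∩ G'.V) \ (S ∩ G'.V) = G.paSet (S ∩ G.V) \ (S ∩ G.V)
    rw [h1, h2, reach_paSet h hS]
  · show {e | e ∈ G'.dir ∧ e.2 ∈ S ∩ G'.V} = {e | e ∈ G.dir ∧ e.2 ∈ S ∩ G.V}
    rw [h1, h2]
    ext e
    simp only [hd, Set.mem_setOf_eq]
    exact ⟨fun ⟨⟨h3, _⟩, h4⟩ => ⟨h3, h4⟩, fun ⟨h3, h4⟩ => ⟨⟨h3, hS h4⟩, h4⟩⟩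
  · show {e | e ∈ G'.bi ∧ e.1 ∈ S ∩ G'.V ∧ e.2 ∈ S ∩ G'.V}
        = {e | e ∈ G.bi ∧ e.1 ∈ S ∩ G.V ∧ e.2 ∈ S ∩ G.V}
    rw [h1, h2]
    ext e
    simp only [hb, Set.mem_setOf_eq]
    exact ⟨fun ⟨⟨h3, _, _⟩, h4, h5⟩ => ⟨h3, h4, h5⟩,
      fun ⟨h3, h4, h5⟩ => ⟨⟨h3, hS h4, hS h5⟩, h4, h5⟩⟩

theorem reach_biconn_iff {G G' : CADMG α} (h : Reach G G') {S : Set α}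
    (hS : S ⊆ G'.V) : G'.BiConn S ↔ G.BiConn S := by
  obtain ⟨hV, -, hb⟩ := reach_struct h
  have hrel : ∀ x y : α, ((x, y) ∈ G'.bi ∧ x ∈ S ∧ y ∈ S) ↔
      ((x, y) ∈ G.bi ∧ x ∈ S ∧ y ∈ S) := by
    intro x y
    rw [hb]
    exact ⟨fun ⟨⟨h1, _, _⟩, h2, h3⟩ => ⟨h1, h2, h3⟩,
      fun ⟨h1, h2, h3⟩ => ⟨⟨h1, hS h2, hS h3⟩, h2, h3⟩⟩
  constructor
  · rintro ⟨-, hc⟩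
    exact ⟨hS.trans hV, fun a ha b hb' =>
      Relation.ReflTransGen.mono (fun x y hxy => (hrel x y).mp hxy) _ _ (hc a ha b hb')⟩
  · rintro ⟨-, hc⟩
    exact ⟨hS, fun a ha b hb' =>
      Relation.ReflTransGen.mono (fun x y hxy => (hrel x y).mpr hxy) _ _ (hc a ha b hb')⟩

theorem key : ∀ {G X : CADMG α}, Reach G X →
    ∀ {T S : Set α} {s0 : α}, (G.IsDistrict T ∨ G.RandomAncestral T) →
    S ⊆ T → s0 ∈ S →
    (∀ b ∈ S, Relation.ReflTransGen
        (fun x y => (x, y) ∈ G.bi ∧ x ∈ S ∧ y ∈ S) s0 b) →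
    S ⊆ X.V →
    ∃ U, S ⊆ U ∧ U ⊆ X.V ∩ T ∧ Reach (G.induce T) (G.induce U) := by
  intro G X hX
  induction hX with
  | refl =>
    intro T S s0 hT hST hs0 _ _
    have hTV : T ⊆ G.V := hT.elim (fun h => h.2.1.1) (fun h => h.1)
    exact ⟨T, hST, fun a ha => ⟨hTV ha, ha⟩, Reach.refl _⟩
  | @district X₂ C hX₂ hC ih =>
    intro T S s0 hT hST hs0 hconn hSX
    have hTV : T ⊆ G.V := hT.elim (fun h => h.2.1.1) (fun h => h.1)
    have hGT : Reach G (G.induce T) :=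
      hT.elim (fun h => Reach.district (Reach.refl G) h)
        (fun h => Reach.margin (Reach.refl G) h)
    have hSC : S ⊆ C := fun a ha => (hSX ha).1
    have hSV₂ : S ⊆ X₂.V := fun a ha => (hSX ha).2
    obtain ⟨U₂, hSU₂, hU₂sub, hreachK⟩ := ih hT hST hs0 hconn hSV₂
    have hGK : Reach G (G.induce U₂) := reach_trans hGT hreachK
    set K := G.induce U₂ with hKdef
    have hKV : K.V = U₂ ∩ G.V := rfl
    have hU₂G : U₂ ⊆ G.V := fun a ha =>
      (reach_struct hX₂).1 (hU₂sub ha).1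
    have hKVeq : K.V = U₂ := by rw [hKV, Set.inter_eq_left.mpr hU₂G]
    have hSKV : S ⊆ K.V := by rw [hKVeq]; exact hSU₂
    -- the district D of K containing S
    set rK : α → α → Prop :=
      fun x y => (x, y) ∈ K.bi ∧ x ∈ K.V ∧ y ∈ K.V with hrK
    set D : Set α := {v | v ∈ K.V ∧ Relation.ReflTransGen rK s0 v} with hD
    have hs0D : s0 ∈ D := ⟨hSKV hs0, Relation.ReflTransGen.refl⟩
    have hSD : S ⊆ D := by
      intro b hb
      refine ⟨hSKV hb, Relation.ReflTransGen.mono ?_ _ _ (hconn b hb)⟩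
      rintro x y ⟨hxy, hx, hy⟩
      exact ⟨⟨hxy, hSKV hx, hSKV hy⟩, hSKV hx, hSKV hy⟩
    have hDV : D ⊆ K.V := fun v hv => hv.1
    -- paths from s0 stay inside D
    have hDpath : ∀ v ∈ D, Relation.ReflTransGen
        (fun x y => (x, y) ∈ K.bi ∧ x ∈ D ∧ y ∈ D) s0 v := by
      rintro v ⟨hvK, hpath⟩
      clear hvK
      induction hpath with
      | refl => exact Relation.ReflTransGen.refl
      | tail h e ih2 =>
        exact ih2.tail ⟨e.1, ⟨e.2.1, h⟩, ⟨e.2.2, h.tail e⟩⟩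
    have hsymmD : Symmetric (fun x y => (x, y) ∈ K.bi ∧ x ∈ D ∧ y ∈ D) := by
      rintro x y ⟨hxy, hx, hy⟩
      exact ⟨K.bi_symm x y hxy, hy, hx⟩
    have hDdist : K.IsDistrict D := by
      refine ⟨⟨s0, hs0D⟩, ⟨hDV, ?_⟩, ?_⟩
      · intro a ha b hb
        exact ((@Relation.ReflTransGen.stdSymm _ _ ⟨fun _ _ h => hsymmD h⟩).symm _ _ (hDpath a ha)).trans
          (hDpath b hb)
      · intro D' hD' hsub
        refine Set.Subset.antisymm ?_ hsub
        intro v hv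
        have hpath := hD'.2 s0 (hsub hs0D) v hv
        refine ⟨hD'.1 hv, Relation.ReflTransGen.mono ?_ _ _ hpath⟩
        rintro x y ⟨hxy, hx, hy⟩
        exact ⟨hxy, hD'.1 hx, hD'.1 hy⟩
    -- D is contained in the district C of X₂
    have hCstep : ∀ x ∈ C, ∀ y, (x, y) ∈ X₂.bi → y ∈ C := by
      intro x hx y hxy
      have hyV : y ∈ X₂.V := (X₂.bi_mem (x, y) hxy).2
      have hsymm' : Symmetric (fun a b => (a, b) ∈ X₂.bi ∧ a ∈ C ∪ {y} ∧ b ∈ C ∪ {y}) := by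
        rintro a b ⟨hab, ha, hb⟩
        exact ⟨X₂.bi_symm a b hab, hb, ha⟩
      have hto : ∀ a ∈ C ∪ {y}, Relation.ReflTransGen
          (fun a b => (a, b) ∈ X₂.bi ∧ a ∈ C ∪ {y} ∧ b ∈ C ∪ {y}) x a := by
        rintro a (ha | ha)
        · refine Relation.ReflTransGen.mono ?_ _ _ (hC.2.1.2 x hx a ha)
          rintro u v ⟨huv, hu, hv⟩
          exact ⟨huv, Or.inl hu, Or.inl hv⟩
        · rw [Set.mem_singleton_iff] at ha
          subst ha
          exact Relation.ReflTransGen.single ⟨hxy, Or.inl hx, Or.inr rfl⟩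
      have hBC : X₂.BiConn (C ∪ {y}) := by
        refine ⟨?_, ?_⟩
        · rintro a (ha | ha)
          · exact hC.2.1.1 ha
          · rw [Set.mem_singleton_iff] at ha; subst ha; exact hyV
        · intro a ha b hb
          exact ((@Relation.ReflTransGen.stdSymm _ _ ⟨fun _ _ h => hsymm' h⟩).symm _ _ (hto a ha)).trans
            (hto b hb)
      have := hC.2.2 (C ∪ {y}) hBC Set.subset_union_left
      rw [← this]
      exact Or.inr rfl
    have hKbiX₂ : K.bi ⊆ X₂.bi := by
      rintro ⟨x, y⟩ ⟨hxy, hx, hy⟩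
      rw [(reach_struct hX₂).2.2]
      have hU₂V₂ : U₂ ⊆ X₂.V := fun a ha => (hU₂sub ha).1
      exact ⟨hxy, hU₂V₂ hx.1, hU₂V₂ hy.1⟩
    have hDC : D ⊆ C := by
      rintro v ⟨hvK, hpath⟩
      clear hvK
      induction hpath with
      | refl => exact hSC hs0
      | tail h e ih2 =>
        exact hCstep _ ih2 _ (hKbiX₂ e.1)
    refine ⟨D, hSD, ?_, ?_⟩
    · intro a ha
      refine ⟨⟨hDC ha, ?_⟩, (hU₂sub ((hKVeq ▸ hDV) ha)).2⟩
      exact (hU₂sub ((hKVeq ▸ hDV) ha)).1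
    · have := Reach.district hreachK hDdist
      rwa [reach_induce hGK hDV] at this
  | @margin X₂ C hX₂ hC ih =>
    intro T S s0 hT hST hs0 hconn hSX
    have hGT : Reach G (G.induce T) :=
      hT.elim (fun h => Reach.district (Reach.refl G) h)
        (fun h => Reach.margin (Reach.refl G) h)
    have hSC : S ⊆ C := fun a ha => (hSX ha).1
    have hSV₂ : S ⊆ X₂.V := fun a ha => (hSX ha).2
    obtain ⟨U₂, hSU₂, hU₂sub, hreachK⟩ := ih hT hST hs0 hconn hSV₂
    have hGK : Reach G (G.induce U₂) := reach_trans hGT hreachK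
    set K := G.induce U₂ with hKdef
    have hU₂V₂ : U₂ ⊆ X₂.V := fun a ha => (hU₂sub ha).1
    have hU₂G : U₂ ⊆ G.V := fun a ha => (reach_struct hX₂).1 (hU₂V₂ ha)
    have hKV : K.V = U₂ ∩ G.V := rfl
    have hKVeq : K.V = U₂ := by rw [hKV, Set.inter_eq_left.mpr hU₂G]
    have hKdir : ∀ e ∈ K.dir, e ∈ X₂.dir := by
      rintro e ⟨he, h2⟩
      rw [(reach_struct hX₂).2.1]
      exact ⟨he, hU₂V₂ h2.1⟩
    have hRA : K.RandomAncestral (C ∩ U₂) := by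
      constructor
      · intro a ha
        rw [hKVeq]; exact ha.2
      · rintro x ⟨v, hv, hpath⟩
        by_cases hxK : x ∈ K.V
        · left
          have hxV₂ : x ∈ X₂.V := hU₂V₂ (hKVeq ▸ hxK)
          have hanc : x ∈ X₂.anc C := by
            refine ⟨v, hv.1, Relation.ReflTransGen.mono ?_ _ _ hpath⟩
            intro a b hab
            exact hKdir (a, b) hab
          rcases hC.2 hanc with h | h
          · exact ⟨h, hKVeq ▸ hxK⟩
          · exact absurd h (Set.disjoint_left.mp X₂.disjointVW hxV₂)
        · right
          rcases Relation.ReflTransGen.cases_head hpath with heq | ⟨y, hxy, -⟩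
          · exact absurd (heq ▸ (show v ∈ K.V by rw [hKVeq]; exact hv.2)) hxK
          · exact ⟨⟨y, hxy.2, hxy.1⟩, hxK⟩
    refine ⟨C ∩ U₂, fun a ha => ⟨hSC ha, hSU₂ ha⟩, ?_, ?_⟩
    · rintro a ⟨haC, haU⟩
      exact ⟨⟨haC, hU₂V₂ haU⟩, (hU₂sub haU).2⟩
    · have hsub : C ∩ U₂ ⊆ K.V := by
        rw [hKVeq]; exact Set.inter_subset_right
      have := Reach.margin hreachK hRA
      rwa [reach_induce hGK hsub] at this

theorem step_case {G X₂ : CADMG α} {C : Set α}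
    (hX2 : Reach G X₂)
    (hC : X₂.IsDistrict C ∨ X₂.RandomAncestral C)
    (ih : ∀ S, G.Intrinsic S → S ⊆ X₂.V → Reach X₂ (X₂.induce S)) :
    ∀ S, G.Intrinsic S → S ⊆ (X₂.induce C).V →
      Reach (X₂.induce C) ((X₂.induce C).induce S) := by
  intro S hS hSV
  have hSC : S ⊆ C := fun a ha => (hSV ha).1
  have hSV₂ : S ⊆ X₂.V := fun a ha => (hSV ha).2
  obtain ⟨s0, hs0⟩ := hS.1
  have hbi := (reach_struct hX2).2.2
  have hconn : ∀ b ∈ S, Relation.ReflTransGen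
      (fun x y => (x, y) ∈ X₂.bi ∧ x ∈ S ∧ y ∈ S) s0 b := by
    intro b hb
    refine Relation.ReflTransGen.mono ?_ _ _ (hS.2.1.2 s0 hs0 b hb)
    rintro x y ⟨hxy, hx, hy⟩
    refine ⟨?_, hx, hy⟩
    rw [hbi]
    exact ⟨hxy, hSV₂ hx, hSV₂ hy⟩
  have hX : Reach X₂ (X₂.induce S) := ih S hS hSV₂
  have hSX : S ⊆ (X₂.induce S).V := fun a ha => ⟨ha, hSV₂ ha⟩
  obtain ⟨U, hSU, hUsub, hre⟩ := key hX hC hSC hs0 hconn hSX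
  have hUS : U = S := Set.Subset.antisymm (fun a ha => (hUsub ha).1.1) hSU
  rw [hUS] at hre
  have hreC : Reach X₂ (X₂.induce C) :=
    hC.elim (fun h => Reach.district (Reach.refl X₂) h)
      (fun h => Reach.margin (Reach.refl X₂) h)
  rwa [reach_induce hreC hSV]

theorem reach_intrinsic : ∀ {G G' : CADMG α}, Reach G G' →
    ∀ S, G.Intrinsic S → S ⊆ G'.V → Reach G' (G'.induce S) := by
  intro G G' h
  induction h with
  | refl => exact fun S hS _ => hS.2.2
  | @district X₂ C h hC ih => exact step_case h (Or.inl hC) ih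
  | @margin X₂ C h hC ih => exact step_case h (Or.inr hC) ih

end CADMG

/-- **Lemma 5 (intrinsic sets are preserved by reachability).**  Let `G'` be a
CADMG reachable from `G`, with random vertex set `V'`.  Then the intrinsic sets
of `G'` are precisely the intrinsic sets of `G` contained in `V'`, and every
such intrinsic set has the same recursive head and the same tail in `G'` as
in `G`. -/
theorem intrinsic_preserved_by_reach {α : Type} (G G' : CADMG α)
    (hreach : CADMG.Reach G G') :
    (∀ S : Set α, G'.Intrinsic S ↔ (G.Intrinsic S ∧ S ⊆ G'.V)) ∧
    (∀ S : Set α, G'.Intrinsic S →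
      G'.sterile S = G.sterile S ∧ G'.paSet S = G.paSet S) := by
  constructor
  · intro S
    constructor
    · rintro ⟨hne, hbc, hr⟩
      have hSV' : S ⊆ G'.V := hbc.1
      refine ⟨⟨hne, (CADMG.reach_biconn_iff hreach hSV').mp hbc, ?_⟩, hSV'⟩
      have h1 := CADMG.reach_trans hreach hr
      rwa [CADMG.reach_induce hreach hSV'] at h1
    · rintro ⟨hInt, hSV'⟩
      exact ⟨hInt.1, (CADMG.reach_biconn_iff hreach hSV').mpr hInt.2.1,
        CADMG.reach_intrinsic hreach S hInt hSV'⟩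
  · intro S hS
    have hSV' : S ⊆ G'.V := hS.2.1.1
    have hpa := CADMG.reach_paSet hreach hSV'
    exact ⟨by unfold CADMG.sterile; rw [hpa], hpa⟩
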